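/- Let M be a nonnegative n×n real matrix (n ≥ 1). Then the Collatz–Wielandt formulae hold: ρ(M) = inf { λ > 0 : there exists a positive vector X ∈ ℝⁿ with MX ≤ λX }; there exists a nonzero nonnegative vector X with MX = ρ(M)·X, so that ρ(M) = max { λ ≥ 0 : ∃ X ∈ ℝ₊ⁿ \ {0}, MX = λX }; and ρ(M) = max { λ ≥ 0 : ∃ X ∈ ℝ₊ⁿ \ {0}, MX ≥ λX }. -/

import Mathlib

set_option linter.unusedSectionVars false
set_option linter.unnecessarySimpa false
set_option maxHeartbeats 1000000

open Filter Matrix Polynomial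
open scoped ENNReal NNReal Topology

attribute [local instance] Matrix.linftyOpNormedRing Matrix.linftyOpNormedAlgebra
  Matrix.linftyOpNormedSpace

namespace CWaux

variable {n : ℕ}

lemma matpow_nonneg {M : Matrix (Fin n) (Fin n) ℝ} (h : ∀ i j, 0 ≤ M i j) (k : ℕ) :
    ∀ i j, 0 ≤ (M ^ k) i j := by
  induction k with
  | zero => intro i j; by_cases hij : i = j <;> simp [pow_zero, Matrix.one_apply, hij]
  | succ k ih =>
      intro i j
      rw [pow_succ, Matrix.mul_apply]
      exact Finset.sum_nonneg fun l _ => mul_nonneg (ih i l) (h l j)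

lemma map_pow' (M : Matrix (Fin n) (Fin n) ℝ) (k : ℕ) :
    (M.map (Complex.ofReal)) ^ k = (M ^ k).map (Complex.ofReal) := by
  have : M.map (Complex.ofReal) = (Complex.ofRealHom.mapMatrix :
      Matrix (Fin n) (Fin n) ℝ →+* Matrix (Fin n) (Fin n) ℂ) M := rfl
  rw [this, ← _root_.map_pow]; rfl

lemma mulVec_mono {W : Matrix (Fin n) (Fin n) ℝ} (hW : ∀ i j, 0 ≤ W i j)
    {u v : Fin n → ℝ} (h : ∀ i, u i ≤ v i) (i : Fin n) :
    W.mulVec u i ≤ W.mulVec v i := by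
  simp only [Matrix.mulVec, dotProduct]
  exact Finset.sum_le_sum fun j _ => mul_le_mul_of_nonneg_left (h j) (hW i j)

lemma rowsum_le_norm (B : Matrix (Fin n) (Fin n) ℂ) (i : Fin n) :
    ∑ j, ‖B i j‖ ≤ ‖B‖ := by
  have h1 : (∑ j, ‖B i j‖₊ : ℝ≥0) ≤ ‖B‖₊ := by
    rw [Matrix.linfty_opNNNorm_def]
    exact Finset.le_sup (f := fun i => ∑ j, ‖B i j‖₊) (Finset.mem_univ i)
  calc ∑ j, ‖B i j‖ = ((∑ j, ‖B i j‖₊ : ℝ≥0) : ℝ) := by push_cast; rfl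
  _ ≤ _ := h1

lemma norm_le_totalsum (B : Matrix (Fin n) (Fin n) ℂ) :
    ‖B‖ ≤ ∑ i, ∑ j, ‖B i j‖ := by
  have h1 : ‖B‖₊ ≤ ∑ i, ∑ j, ‖B i j‖₊ := by
    rw [Matrix.linfty_opNNNorm_def]
    exact Finset.sup_le fun i _ =>
      Finset.single_le_sum (f := fun i => ∑ j, ‖B i j‖₊)
        (fun i _ => Finset.sum_nonneg fun j _ => zero_le) (Finset.mem_univ i)
  calc ‖B‖ ≤ ((∑ i, ∑ j, ‖B i j‖₊ : ℝ≥0) : ℝ) := h1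
  _ = _ := by push_cast; rfl

lemma eval_charpoly (A : Matrix (Fin n) (Fin n) ℂ) (t : ℂ) :
    A.charpoly.eval t = (t • 1 - A).det := by
  rw [Matrix.charpoly, eval_det, Matrix.matPolyEquiv_charmatrix]
  congr 1
  simp only [Polynomial.eval_sub, Polynomial.eval_X, Polynomial.eval_C]
  ext i j
  simp [Matrix.scalar_apply, Matrix.smul_apply, Matrix.diagonal_apply, Matrix.one_apply,
    Matrix.algebraMap_matrix_apply]

lemma normbound (M : Matrix (Fin n) (Fin n) ℝ) {ρ : ℝ} (hρ0 : 0 ≤ ρ)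
    (hub : ∀ z : ℂ, ((M.map (Complex.ofReal)).charpoly).IsRoot z → ‖z‖ ≤ ρ)
    {r : ℝ} (hr : ρ < r) :
    ∃ C : ℝ, 1 ≤ C ∧ ∀ k : ℕ, ‖(M.map (Complex.ofReal)) ^ k‖ ≤ C * r ^ k := by
  set A := M.map (Complex.ofReal) with hA
  haveI : CompleteSpace (Matrix (Fin n) (Fin n) ℂ) := FiniteDimensional.complete ℂ _
  have hrpos : 0 < r := lt_of_le_of_lt hρ0 hr
  have hsr : spectralRadius ℂ A ≤ ENNReal.ofReal ρ := by
    rw [spectralRadius]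
    refine iSup₂_le fun z hz => ?_
    have hroot : A.charpoly.IsRoot z := by
      have hmem := spectrum.mem_iff.mp hz
      rw [Polynomial.IsRoot, eval_charpoly]
      by_contra hdet
      apply hmem
      have hu : IsUnit (z • (1 : Matrix (Fin n) (Fin n) ℂ) - A) :=
        (Matrix.isUnit_iff_isUnit_det _).mpr (isUnit_iff_ne_zero.mpr hdet)
      convert hu using 2
      simp [Algebra.algebraMap_eq_smul_one]
    have hle : ‖z‖ ≤ ρ := by exact hub z hroot
    calc (‖z‖₊ : ℝ≥0∞) = ENNReal.ofReal ‖z‖ := (ofReal_norm z).symm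
    _ ≤ ENNReal.ofReal ρ := ENNReal.ofReal_le_ofReal hle
  have hls := spectrum.limsup_pow_nnnorm_pow_one_div_le_spectralRadius A
  have hlt : Filter.limsup (fun k : ℕ => (‖A ^ k‖₊ : ℝ≥0∞) ^ (1/(k:ℝ))) atTop
      < ENNReal.ofReal r :=
    lt_of_le_of_lt (hls.trans hsr) ((ENNReal.ofReal_lt_ofReal_iff hrpos).mpr hr)
  have hev : ∀ᶠ k : ℕ in atTop, (‖A ^ k‖₊ : ℝ≥0∞) ^ (1/(k:ℝ)) < ENNReal.ofReal r :=
    Filter.eventually_lt_of_limsup_lt hlt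
  have hev2 : ∀ᶠ k : ℕ in atTop, ‖A ^ k‖ ≤ r ^ k := by
    filter_upwards [hev, Filter.eventually_ge_atTop 1] with k hk hk1
    have hkne : (k : ℝ) ≠ 0 := Nat.cast_ne_zero.mpr (by omega)
    have h1 : (‖A ^ k‖₊ : ℝ≥0∞) = ((‖A ^ k‖₊ : ℝ≥0∞) ^ (1/(k:ℝ))) ^ (k:ℝ) := by
      rw [← ENNReal.rpow_mul, one_div_mul_cancel hkne, ENNReal.rpow_one]
    have h2 : (‖A ^ k‖₊ : ℝ≥0∞) ≤ (ENNReal.ofReal r) ^ (k:ℕ) := by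
      rw [h1, ← ENNReal.rpow_natCast (ENNReal.ofReal r) k]
      exact ENNReal.rpow_le_rpow hk.le (Nat.cast_nonneg k)
    rw [← ENNReal.ofReal_pow hrpos.le, ← ENNReal.ofReal_coe_nnreal, coe_nnnorm,
      ENNReal.ofReal_le_ofReal_iff (by positivity)] at h2
    exact h2
  obtain ⟨K, hK⟩ := eventually_atTop.mp hev2
  refine ⟨1 + ∑ k ∈ Finset.range K, ‖A ^ k‖ / r ^ k, le_add_of_nonneg_right
    (Finset.sum_nonneg fun k _ => by positivity), fun k => ?_⟩
  rcases le_or_gt K k with h | h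
  · calc ‖A ^ k‖ ≤ r ^ k := hK k h
    _ ≤ (1 + ∑ k ∈ Finset.range K, ‖A ^ k‖ / r ^ k) * r ^ k := by
        nlinarith [Finset.sum_nonneg (fun k (_ : k ∈ Finset.range K) => by positivity :
          ∀ k ∈ Finset.range K, (0:ℝ) ≤ ‖A ^ k‖ / r ^ k), pow_pos hrpos k]
  · have h1 : ‖A ^ k‖ / r ^ k ≤ ∑ j ∈ Finset.range K, ‖A ^ j‖ / r ^ j :=
      Finset.single_le_sum (f := fun j => ‖A ^ j‖ / r ^ j)
        (fun j _ => by positivity) (Finset.mem_range.mpr h)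
    rw [div_le_iff₀ (pow_pos hrpos k)] at h1
    nlinarith [pow_pos hrpos k]


lemma rowsum_bound (M : Matrix (Fin n) (Fin n) ℝ) (hnn : ∀ i j, 0 ≤ M i j)
    {ρ : ℝ} (hρ0 : 0 ≤ ρ)
    (hub : ∀ z : ℂ, ((M.map (Complex.ofReal)).charpoly).IsRoot z → ‖z‖ ≤ ρ)
    {r : ℝ} (hr : ρ < r) :
    ∃ C : ℝ, 1 ≤ C ∧ ∀ (k : ℕ) (i : Fin n), ∑ j, (M ^ k) i j ≤ C * r ^ k := by
  obtain ⟨C, hC1, hC⟩ := normbound M hρ0 hub hr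
  refine ⟨C, hC1, fun k i => ?_⟩
  calc ∑ j, (M ^ k) i j = ∑ j, ‖((M.map Complex.ofReal) ^ k) i j‖ := by
        rw [map_pow']
        exact (Finset.sum_congr rfl fun j _ => by
          simp [Matrix.map_apply, Complex.norm_real, Real.norm_eq_abs,
            abs_of_nonneg (matpow_nonneg hnn k i j)]).symm
  _ ≤ ‖(M.map Complex.ofReal) ^ k‖ := rowsum_le_norm _ i
  _ ≤ C * r ^ k := hC k

lemma cw_le (M : Matrix (Fin n) (Fin n) ℝ) (hnn : ∀ i j, 0 ≤ M i j)
    {z : ℂ} (hz : ((M.map (Complex.ofReal)).charpoly).IsRoot z)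
    {lam : ℝ} {X : Fin n → ℝ} (hX : ∀ i, 0 < X i)
    (hle : ∀ i, M.mulVec X i ≤ lam * X i) : ‖z‖ ≤ lam := by
  set A := M.map (Complex.ofReal) with hA
  have hdet : (z • (1 : Matrix (Fin n) (Fin n) ℂ) - A).det = 0 := by
    rw [← eval_charpoly]; exact hz
  obtain ⟨v, hv0, hv⟩ := (Matrix.exists_mulVec_eq_zero_iff).mpr hdet
  have hAv : ∀ i, (A.mulVec v) i = z * v i := by
    intro i
    have h := congrFun hv i
    simp only [Matrix.sub_mulVec, Matrix.smul_mulVec, Matrix.one_mulVec,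
      Pi.sub_apply, Pi.smul_apply, smul_eq_mul, Pi.zero_apply] at h
    linear_combination -h
  obtain ⟨j₀, hj₀⟩ := Function.ne_iff.mp hv0
  obtain ⟨i₀, -, hmax⟩ := Finset.exists_max_image Finset.univ
    (fun i => ‖v i‖ / X i) ⟨j₀, Finset.mem_univ j₀⟩
  set c := ‖v i₀‖ / X i₀ with hc
  have key : ∀ j, ‖v j‖ ≤ c * X j := fun j =>
    (div_le_iff₀ (hX j)).mp (hmax j (Finset.mem_univ j))
  have hc0 : 0 < c := by
    have h1 : 0 < ‖v j₀‖ / X j₀ := by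
      apply div_pos _ (hX j₀)
      simpa using hj₀
    exact lt_of_lt_of_le h1 (hmax j₀ (Finset.mem_univ j₀))
  have hvpos : 0 < ‖v i₀‖ := by
    have : c * X i₀ = ‖v i₀‖ := div_mul_cancel₀ _ (hX i₀).ne'
    rw [← this]; exact mul_pos hc0 (hX i₀)
  have chain : ‖z‖ * ‖v i₀‖ ≤ lam * ‖v i₀‖ := by
    calc ‖z‖ * ‖v i₀‖ = ‖z * v i₀‖ := (norm_mul _ _).symm
    _ = ‖∑ j, A i₀ j * v j‖ := by
        rw [← hAv i₀]; congr 1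
    _ ≤ ∑ j, ‖A i₀ j * v j‖ := norm_sum_le _ _
    _ = ∑ j, M i₀ j * ‖v j‖ := by
        refine Finset.sum_congr rfl fun j _ => ?_
        rw [norm_mul]
        congr 1
        simp only [hA, Matrix.map_apply, Complex.norm_real, Real.norm_eq_abs]
        exact abs_of_nonneg (hnn i₀ j)
    _ ≤ ∑ j, M i₀ j * (c * X j) := Finset.sum_le_sum fun j _ =>
        mul_le_mul_of_nonneg_left (key j) (hnn i₀ j)
    _ = c * M.mulVec X i₀ := by
        rw [Matrix.mulVec, dotProduct, Finset.mul_sum]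
        exact Finset.sum_congr rfl fun j _ => by ring
    _ ≤ c * (lam * X i₀) := mul_le_mul_of_nonneg_left (hle i₀) hc0.le
    _ = lam * (c * X i₀) := by ring
    _ = lam * ‖v i₀‖ := by rw [div_mul_cancel₀ _ (hX i₀).ne']
  exact le_of_mul_le_mul_right chain hvpos

lemma cw_ge (M : Matrix (Fin n) (Fin n) ℝ) (hnn : ∀ i j, 0 ≤ M i j)
    {ρ : ℝ} (hρ0 : 0 ≤ ρ)
    (hub : ∀ z : ℂ, ((M.map (Complex.ofReal)).charpoly).IsRoot z → ‖z‖ ≤ ρ)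
    {lam : ℝ} {X : Fin n → ℝ} (hX0 : X ≠ 0) (hX : ∀ i, 0 ≤ X i)
    (hge : ∀ i, lam * X i ≤ M.mulVec X i) : lam ≤ ρ := by
  by_contra hcon
  push_neg at hcon
  have hlam0 : 0 < lam := lt_of_le_of_lt hρ0 hcon
  set r := (ρ + lam) / 2 with hrdef
  have hr1 : ρ < r := by rw [hrdef]; linarith
  have hr2 : r < lam := by rw [hrdef]; linarith
  have hrpos : 0 < r := lt_of_le_of_lt hρ0 hr1
  obtain ⟨C, hC1, hC⟩ := rowsum_bound M hnn hρ0 hub hr1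
  have hpow : ∀ k : ℕ, ∀ i, lam ^ k * X i ≤ ((M ^ k).mulVec X) i := by
    intro k
    induction k with
    | zero => intro i; simp [Matrix.one_mulVec]
    | succ k ih =>
        intro i
        have h2 : ((M ^ (k+1)).mulVec X) i = ((M ^ k).mulVec (M.mulVec X)) i := by
          rw [Matrix.mulVec_mulVec, ← pow_succ]
        rw [h2]
        calc lam ^ (k+1) * X i = lam * (lam ^ k * X i) := by ring
        _ ≤ lam * ((M ^ k).mulVec X) i := mul_le_mul_of_nonneg_left (ih i) hlam0.le
        _ = ((M ^ k).mulVec (lam • X)) i := by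
            rw [Matrix.mulVec_smul]; simp
        _ ≤ ((M ^ k).mulVec (M.mulVec X)) i :=
            mulVec_mono (matpow_nonneg hnn k) (fun j => hge j) i
  obtain ⟨i₀, hi₀⟩ := Function.ne_iff.mp hX0
  have hXi₀ : 0 < X i₀ := lt_of_le_of_ne (hX i₀) (Ne.symm (by simpa using hi₀))
  set B := ∑ j, X j with hB
  have hXB : ∀ j, X j ≤ B := fun j =>
    Finset.single_le_sum (fun j _ => hX j) (Finset.mem_univ j)
  have hBpos : 0 < B := lt_of_lt_of_le hXi₀ (hXB i₀)
  have key : ∀ k : ℕ, lam ^ k * X i₀ ≤ C * r ^ k * B := by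
    intro k
    calc lam ^ k * X i₀ ≤ ((M ^ k).mulVec X) i₀ := hpow k i₀
    _ = ∑ j, (M ^ k) i₀ j * X j := by simp [Matrix.mulVec, dotProduct]
    _ ≤ ∑ j, (M ^ k) i₀ j * B := Finset.sum_le_sum fun j _ =>
        mul_le_mul_of_nonneg_left (hXB j) (matpow_nonneg hnn k i₀ j)
    _ = (∑ j, (M ^ k) i₀ j) * B := by rw [Finset.sum_mul]
    _ ≤ C * r ^ k * B := mul_le_mul_of_nonneg_right (hC k i₀) hBpos.le
  obtain ⟨k, hk⟩ := pow_unbounded_of_one_lt (C * B / X i₀) ((one_lt_div hrpos).mpr hr2)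
  have hk' : lam ^ k ≤ C * r ^ k * B / X i₀ := by
    rw [le_div_iff₀ hXi₀]; exact key k
  rw [div_pow, lt_div_iff₀ (pow_pos hrpos k)] at hk
  have e1 : lam ^ k ≤ C * B / X i₀ * r ^ k := by
    rw [div_mul_eq_mul_div, le_div_iff₀ hXi₀]
    nlinarith [key k]
  exact absurd (lt_of_lt_of_le hk e1) (lt_irrefl _)

noncomputable def Sv (M : Matrix (Fin n) (Fin n) ℝ) (t : ℝ) (i : Fin n) : ℝ :=
  ∑' k : ℕ, (t⁻¹) ^ (k + 1) * ((M ^ k).mulVec 1) i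

section
variable (M : Matrix (Fin n) (Fin n) ℝ) (hnn : ∀ i j, 0 ≤ M i j) {ρ : ℝ} (hρ0 : 0 ≤ ρ)
    (hub : ∀ z : ℂ, ((M.map (Complex.ofReal)).charpoly).IsRoot z → ‖z‖ ≤ ρ)
    {t : ℝ} (ht : ρ < t)

lemma rowsum_eq (k : ℕ) (i : Fin n) : ((M ^ k).mulVec 1) i = ∑ j, (M ^ k) i j := by
  simp [Matrix.mulVec, dotProduct]

include hnn hρ0 hub ht

lemma term_nonneg (k : ℕ) (i : Fin n) :
    0 ≤ (t⁻¹) ^ (k + 1) * ((M ^ k).mulVec 1) i := by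
  have htpos : 0 < t := lt_of_le_of_lt hρ0 ht
  have h1 : 0 ≤ ((M ^ k).mulVec 1) i := by
    rw [rowsum_eq]
    exact Finset.sum_nonneg fun j _ => matpow_nonneg hnn k i j
  positivity

lemma Sv_summable (i : Fin n) :
    Summable (fun k : ℕ => (t⁻¹) ^ (k + 1) * ((M ^ k).mulVec 1) i) := by
  have htpos : 0 < t := lt_of_le_of_lt hρ0 ht
  set r := (ρ + t) / 2 with hrdef
  have hr1 : ρ < r := by rw [hrdef]; linarith
  have hr2 : r < t := by rw [hrdef]; linarith
  have hrpos : 0 < r := lt_of_le_of_lt hρ0 hr1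
  obtain ⟨C, hC1, hC⟩ := rowsum_bound M hnn hρ0 hub hr1
  refine Summable.of_nonneg_of_le (fun k => term_nonneg M hnn hρ0 hub ht k i)
    (f := fun k => (C / t) * (r / t) ^ k) (fun k => ?_) ?_
  · rw [rowsum_eq]
    calc (t⁻¹) ^ (k+1) * ∑ j, (M ^ k) i j ≤ (t⁻¹) ^ (k+1) * (C * r ^ k) :=
          mul_le_mul_of_nonneg_left (hC k i) (by positivity)
    _ = (C / t) * (r / t) ^ k := by
        rw [pow_succ]
        field_simp
        ring
  · exact (summable_geometric_of_lt_one (by positivity)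
      (by rw [div_lt_one htpos]; exact hr2)).mul_left _

lemma Sv_pos (i : Fin n) : t⁻¹ ≤ Sv M t i := by
  have h0 := Summable.le_tsum (Sv_summable M hnn hρ0 hub ht i) 0 (fun k _ => term_nonneg M hnn hρ0 hub ht k i)
  rw [Sv]
  refine le_trans (le_of_eq ?_) h0
  simp [Matrix.one_mulVec]

lemma Sv_anti {t' : ℝ} (ht' : t ≤ t') (i : Fin n) : Sv M t' i ≤ Sv M t i := by
  have htpos : 0 < t := lt_of_le_of_lt hρ0 ht
  refine Summable.tsum_le_tsum (fun k => ?_) (Sv_summable M hnn hρ0 hub (lt_of_lt_of_le ht ht') i)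
    (Sv_summable M hnn hρ0 hub ht i)
  have h1 : 0 ≤ ((M ^ k).mulVec 1) i := by
    rw [rowsum_eq]; exact Finset.sum_nonneg fun j _ => matpow_nonneg hnn k i j
  refine mul_le_mul_of_nonneg_right (pow_le_pow_left₀ (inv_nonneg.mpr ((htpos.le.trans ht'))) ?_ _) h1
  exact inv_anti₀ htpos ht'

lemma Sv_partial_le (K : ℕ) (i : Fin n) :
    ∑ k ∈ Finset.range K, (t⁻¹) ^ (k + 1) * ((M ^ k).mulVec 1) i ≤ Sv M t i :=
  Summable.sum_le_tsum _ (fun k _ => term_nonneg M hnn hρ0 hub ht k i) (Sv_summable M hnn hρ0 hub ht i)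

lemma Sv_mulVec (i : Fin n) : M.mulVec (Sv M t) i = t * Sv M t i - 1 := by
  have htpos : 0 < t := lt_of_le_of_lt hρ0 ht
  have hsum := Sv_summable M hnn hρ0 hub ht
  have step1 : M.mulVec (Sv M t) i
      = ∑ j, ∑' k : ℕ, M i j * ((t⁻¹) ^ (k + 1) * ((M ^ k).mulVec 1) j) := by
    simp only [Matrix.mulVec, dotProduct, Sv]
    exact Finset.sum_congr rfl fun j _ => (tsum_mul_left).symm
  have step2 : M.mulVec (Sv M t) i
      = ∑' k : ℕ, (t⁻¹) ^ (k + 1) * ((M ^ (k+1)).mulVec 1) i := by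
    rw [step1, ← Summable.tsum_finsetSum (fun j _ => (hsum j).mul_left (M i j))]
    congr 1
    funext k
    have : ∑ j, M i j * ((t⁻¹) ^ (k + 1) * ((M ^ k).mulVec 1) j)
        = (t⁻¹) ^ (k + 1) * ∑ j, M i j * ((M ^ k).mulVec 1) j := by
      rw [Finset.mul_sum]; exact Finset.sum_congr rfl fun j _ => by ring
    rw [this]
    congr 1
    have : (∑ j, M i j * ((M ^ k).mulVec 1) j) = (M.mulVec ((M ^ k).mulVec 1)) i := by
      simp [Matrix.mulVec, dotProduct]
    rw [this, Matrix.mulVec_mulVec, ← pow_succ']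
  have hsum2 : Summable (fun k : ℕ => (t⁻¹) ^ k * ((M ^ k).mulVec 1) i) := by
    have h := (hsum i).mul_left t
    refine h.congr fun k => ?_
    rw [pow_succ]
    field_simp
  have step3 : t * Sv M t i = ∑' k : ℕ, (t⁻¹) ^ k * ((M ^ k).mulVec 1) i := by
    rw [Sv, ← tsum_mul_left]
    congr 1; funext k
    rw [pow_succ]; field_simp
  rw [step2, step3, Summable.tsum_eq_zero_add hsum2]
  simp [Matrix.one_mulVec]
end

lemma blowup (M : Matrix (Fin n) (Fin n) ℝ) (hnn : ∀ i j, 0 ≤ M i j) {ρ : ℝ}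
    (hρpos : 0 < ρ)
    (hub : ∀ z : ℂ, ((M.map (Complex.ofReal)).charpoly).IsRoot z → ‖z‖ ≤ ρ)
    {z₀ : ℂ} (hz₀ : ((M.map (Complex.ofReal)).charpoly).IsRoot z₀)
    (habs : ‖z₀‖ = ρ) :
    ∀ B : ℝ, ∃ m : ℕ, ∃ i, B < Sv M (ρ + 1/(m+1)) i := by
  set A := M.map (Complex.ofReal) with hA
  by_contra hcon
  push_neg at hcon
  obtain ⟨B, hB⟩ := hcon
  have htm : ∀ m : ℕ, ρ < ρ + 1/((m:ℝ)+1) := fun m => by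
    have : (0:ℝ) < 1/((m:ℝ)+1) := by positivity
    linarith
  -- partial sums at ρ are bounded by B
  have hpartial : ∀ K : ℕ, ∀ i, ∑ k ∈ Finset.range K, ρ⁻¹ ^ (k+1) * ((M ^ k).mulVec 1) i ≤ B := by
    intro K i
    have hten : Tendsto (fun m : ℕ => ∑ k ∈ Finset.range K,
        ((ρ + 1/((m:ℝ)+1))⁻¹) ^ (k+1) * ((M ^ k).mulVec 1) i) atTop
        (𝓝 (∑ k ∈ Finset.range K, ρ⁻¹ ^ (k+1) * ((M ^ k).mulVec 1) i)) := by
      apply tendsto_finset_sum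
      intro k _
      apply Tendsto.mul_const
      apply Tendsto.pow
      apply Tendsto.inv₀ _ hρpos.ne'
      have h1 : Tendsto (fun m : ℕ => 1/((m:ℝ)+1)) atTop (𝓝 0) :=
        tendsto_one_div_add_atTop_nhds_zero_nat
      simpa using tendsto_const_nhds.add h1
    refine le_of_tendsto hten ?_
    filter_upwards with m
    exact le_trans (Sv_partial_le M hnn hρpos.le hub (htm m) K i) (hB m i)
  -- summability at ρ of the diagonal-resolvent series
  have hsumρ : ∀ i, Summable (fun k : ℕ => ρ⁻¹ ^ (k+1) * ((M ^ k).mulVec 1) i) := by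
    intro i
    refine summable_of_sum_range_le (fun k => ?_) (fun K => hpartial K i)
    have h1 : 0 ≤ ((M ^ k).mulVec 1) i := by
      rw [rowsum_eq]; exact Finset.sum_nonneg fun j _ => matpow_nonneg hnn k i j
    positivity
  -- summability of matrix geometric series at z₀⁻¹ • A
  set x := z₀⁻¹ • A with hx
  have hz₀ne : z₀ ≠ 0 := by
    intro h; rw [h] at habs; simp at habs; exact hρpos.ne' habs.symm
  have hxpow : ∀ k : ℕ, x ^ k = (z₀⁻¹) ^ k • A ^ k := fun k => smul_pow _ _ _
  have hnormx : ∀ k : ℕ, ‖x ^ k‖ ≤ ∑ i, ∑ j, ρ⁻¹ ^ k * (M ^ k) i j := by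
    intro k
    rw [hxpow, norm_smul]
    have h1 : ‖(z₀⁻¹) ^ k‖ = ρ⁻¹ ^ k := by
      rw [norm_pow, norm_inv, habs]
    rw [h1]
    have h2 : ‖A ^ k‖ ≤ ∑ i, ∑ j, (M ^ k) i j := by
      refine le_trans (norm_le_totalsum _) (le_of_eq ?_)
      rw [map_pow']
      refine Finset.sum_congr rfl fun i _ => Finset.sum_congr rfl fun j _ => ?_
      simp [Matrix.map_apply, Complex.norm_real, Real.norm_eq_abs,
        abs_of_nonneg (matpow_nonneg hnn k i j)]
    calc ρ⁻¹ ^ k * ‖A ^ k‖ ≤ ρ⁻¹ ^ k * ∑ i, ∑ j, (M ^ k) i j :=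
        mul_le_mul_of_nonneg_left h2 (by positivity)
    _ = ∑ i, ∑ j, ρ⁻¹ ^ k * (M ^ k) i j := by
        rw [Finset.mul_sum]
        exact Finset.sum_congr rfl fun i _ => by rw [Finset.mul_sum]
  have hsumx : Summable (fun k : ℕ => x ^ k) := by
    haveI : CompleteSpace (Matrix (Fin n) (Fin n) ℂ) := FiniteDimensional.complete ℂ _
    refine Summable.of_norm_bounded ?_ hnormx
    refine summable_sum fun i _ => summable_sum fun j _ => ?_
    refine Summable.of_nonneg_of_le
      (fun k => mul_nonneg (by positivity) (matpow_nonneg hnn k i j)) ?_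
      (((hsumρ i).mul_left ρ))
    intro k
    have hentry : (M ^ k) i j ≤ ((M ^ k).mulVec 1) i := by
      rw [rowsum_eq]
      exact Finset.single_le_sum (fun l _ => matpow_nonneg hnn k i l) (Finset.mem_univ j)
    calc ρ⁻¹ ^ k * (M ^ k) i j ≤ ρ⁻¹ ^ k * ((M ^ k).mulVec 1) i :=
        mul_le_mul_of_nonneg_left hentry (by positivity)
    _ = ρ * (ρ⁻¹ ^ (k+1) * ((M ^ k).mulVec 1) i) := by
        rw [pow_succ]; field_simp
  -- hence 1 - x is a unit, so z₀ • 1 - A is a unit: contradiction with root z₀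
  haveI : CompleteSpace (Matrix (Fin n) (Fin n) ℂ) := FiniteDimensional.complete ℂ _
  set S := ∑' k : ℕ, x ^ k with hS
  have hshift : S = 1 + ∑' k : ℕ, x ^ (k+1) := by
    rw [hS, Summable.tsum_eq_zero_add hsumx, pow_zero]
  have hxS : x * S = ∑' k : ℕ, x ^ (k+1) := by
    rw [hS, ← (hsumx.hasSum.mul_left x).tsum_eq]
    exact tsum_congr fun k => (pow_succ' x k).symm
  have hSx : S * x = ∑' k : ℕ, x ^ (k+1) := by
    rw [hS, ← (hsumx.hasSum.mul_right x).tsum_eq]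
    exact tsum_congr fun k => (pow_succ x k).symm
  have hunit : IsUnit ((1 : Matrix (Fin n) (Fin n) ℂ) - x) := by
    refine isUnit_iff_exists.mpr ⟨S, ?_, ?_⟩
    · rw [sub_mul, one_mul, hxS, hshift]; abel
    · rw [mul_sub, mul_one, hSx, hshift]; abel
  have hunit2 : IsUnit (z₀ • (1 : Matrix (Fin n) (Fin n) ℂ) - A) := by
    have h3 : z₀ • ((1 : Matrix (Fin n) (Fin n) ℂ) - x) = z₀ • 1 - A := by
      rw [smul_sub, hx, smul_smul, mul_inv_cancel₀ hz₀ne, one_smul]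
    rw [← h3]
    have h4 : z₀ • ((1 : Matrix (Fin n) (Fin n) ℂ) - x)
        = (z₀ • (1 : Matrix (Fin n) (Fin n) ℂ)) * (1 - x) := by
      rw [smul_mul_assoc, one_mul]
    rw [h4]
    refine IsUnit.mul ?_ hunit
    rw [← Algebra.algebraMap_eq_smul_one]
    exact (isUnit_iff_ne_zero.mpr hz₀ne).map (algebraMap ℂ (Matrix (Fin n) (Fin n) ℂ))
  have hdet : (z₀ • (1 : Matrix (Fin n) (Fin n) ℂ) - A).det ≠ 0 :=
    ((Matrix.isUnit_iff_isUnit_det _).mp hunit2).ne_zero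
  exact hdet (by rw [← eval_charpoly]; exact hz₀)

section
variable (M : Matrix (Fin n) (Fin n) ℝ) (hnn : ∀ i j, 0 ≤ M i j) {ρ : ℝ}
    (hub : ∀ z : ℂ, ((M.map (Complex.ofReal)).charpoly).IsRoot z → ‖z‖ ≤ ρ)
include hnn hub

lemma exist_eigen_pos (hn : 1 ≤ n) (hρpos : 0 < ρ)
    {z₀ : ℂ} (hz₀ : ((M.map (Complex.ofReal)).charpoly).IsRoot z₀)
    (habs : ‖z₀‖ = ρ) :
    ∃ X : Fin n → ℝ, X ≠ 0 ∧ (∀ i, 0 ≤ X i) ∧ (∀ i, M.mulVec X i = ρ * X i) := by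
  set t : ℕ → ℝ := fun m => ρ + 1/((m:ℝ)+1) with htdef
  have htm : ∀ m, ρ < t m := fun m => by
    have : (0:ℝ) < 1/((m:ℝ)+1) := by positivity
    simp only [htdef]; linarith
  have hSvnn : ∀ m i, 0 ≤ Sv M (t m) i := fun m i =>
    le_trans (by positivity) (Sv_pos M hnn hρpos.le hub (htm m) i)
  set N : ℕ → ℝ := fun m => ‖Sv M (t m)‖ with hNdef
  have hSv_le_N : ∀ m i, Sv M (t m) i ≤ N m := fun m i => by
    calc Sv M (t m) i ≤ |Sv M (t m) i| := le_abs_self _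
    _ = ‖Sv M (t m) i‖ := (Real.norm_eq_abs _).symm
    _ ≤ N m := norm_le_pi_norm _ i
  have hNpos : ∀ m, 0 < N m := fun m => by
    have i0 : Fin n := ⟨0, hn⟩
    have h1 : (t m)⁻¹ ≤ N m := le_trans (Sv_pos M hnn hρpos.le hub (htm m) i0) (hSv_le_N m i0)
    have : 0 < (t m)⁻¹ := by
      have := htm m; have : 0 < t m := lt_of_le_of_lt hρpos.le (htm m)
      positivity
    linarith
  have hNmono : Monotone N := by
    intro m m' hmm'
    have ht' : t m' ≤ t m := by
      simp only [htdef]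
      have h1 : (1:ℝ)/((m:ℝ)+1) ≥ 1/((m':ℝ)+1) := by
        apply one_div_le_one_div_of_le (by positivity)
        have : (m:ℝ) ≤ (m':ℝ) := Nat.cast_le.mpr hmm'
        linarith
      linarith
    have hentry : ∀ i, Sv M (t m) i ≤ Sv M (t m') i := fun i =>
      Sv_anti M hnn hρpos.le hub (htm m') ht' i
    rw [hNdef]
    refine (pi_norm_le_iff_of_nonneg (norm_nonneg _)).mpr fun i => ?_
    rw [Real.norm_eq_abs, abs_of_nonneg (hSvnn m i)]
    exact le_trans (hentry i) (hSv_le_N m' i)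
  have hNtop : Tendsto N atTop atTop := by
    refine tendsto_atTop_atTop_of_monotone hNmono fun B => ?_
    obtain ⟨m, i, hmi⟩ := blowup M hnn hρpos hub hz₀ habs B
    exact ⟨m, le_trans hmi.le (hSv_le_N m i)⟩
  set Y : ℕ → Fin n → ℝ := fun m => (N m)⁻¹ • Sv M (t m) with hYdef
  have hYnorm : ∀ m, ‖Y m‖ = 1 := fun m => by
    rw [hYdef]
    simp only [norm_smul, Real.norm_eq_abs, abs_of_nonneg (inv_nonneg.mpr (hNpos m).le)]
    exact inv_mul_cancel₀ (hNpos m).ne'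
  have hYmem : ∀ m, Y m ∈ Metric.closedBall (0 : Fin n → ℝ) 1 := fun m => by
    rw [Metric.mem_closedBall, dist_zero_right, hYnorm m]
  obtain ⟨Xl, hXlmem, φ, hφmono, hφtend⟩ :=
    tendsto_subseq_of_bounded Metric.isBounded_closedBall hYmem
  have hcoord : ∀ i, Tendsto (fun j => Y (φ j) i) atTop (𝓝 (Xl i)) := fun i =>
    ((continuous_apply i).tendsto Xl).comp hφtend
  have hφtop : Tendsto φ atTop atTop := hφmono.tendsto_atTop
  have httend : Tendsto (fun j => t (φ j)) atTop (𝓝 ρ) := by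
    have h1 : Tendsto (fun m : ℕ => 1/((m:ℝ)+1)) atTop (𝓝 0) :=
      tendsto_one_div_add_atTop_nhds_zero_nat
    have h2 := (h1.comp hφtop)
    have := tendsto_const_nhds (x := ρ) (f := atTop (α := ℕ)) |>.add h2
    simpa [htdef, one_div] using this
  have hNinv : Tendsto (fun j => (N (φ j))⁻¹) atTop (𝓝 0) :=
    tendsto_inv_atTop_zero.comp (hNtop.comp hφtop)
  have hMY : ∀ m i, M.mulVec (Y m) i = t m * Y m i - (N m)⁻¹ := by
    intro m i
    rw [hYdef]
    have h1 : M.mulVec ((N m)⁻¹ • Sv M (t m)) i = (N m)⁻¹ * (M.mulVec (Sv M (t m)) i) := by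
      rw [Matrix.mulVec_smul]; simp
    rw [h1, Sv_mulVec M hnn hρpos.le hub (htm m) i]
    simp only [Pi.smul_apply, smul_eq_mul]
    ring
  have heig : ∀ i, M.mulVec Xl i = ρ * Xl i := by
    intro i
    have hL : Tendsto (fun j => M.mulVec (Y (φ j)) i) atTop (𝓝 (M.mulVec Xl i)) := by
      simp only [Matrix.mulVec, dotProduct]
      exact tendsto_finset_sum _ fun l _ => (hcoord l).const_mul (M i l)
    have hR : Tendsto (fun j => t (φ j) * Y (φ j) i - (N (φ j))⁻¹) atTop
        (𝓝 (ρ * Xl i - 0)) := (httend.mul (hcoord i)).sub hNinv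
    have hLR : (fun j => M.mulVec (Y (φ j)) i)
        = fun j => t (φ j) * Y (φ j) i - (N (φ j))⁻¹ := funext fun j => hMY (φ j) i
    rw [hLR] at hL
    have := tendsto_nhds_unique hL hR
    rw [this, sub_zero]
  have hXnn : ∀ i, 0 ≤ Xl i := fun i => by
    refine ge_of_tendsto (hcoord i) (Eventually.of_forall fun j => ?_)
    exact mul_nonneg (inv_nonneg.mpr (hNpos (φ j)).le) (hSvnn (φ j) i)
  have hXnorm : ‖Xl‖ = 1 := by
    have h1 : Tendsto (fun j => ‖Y (φ j)‖) atTop (𝓝 ‖Xl‖) :=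
      (continuous_norm.tendsto Xl).comp hφtend
    have h2 : Tendsto (fun j : ℕ => (1:ℝ)) atTop (𝓝 1) := tendsto_const_nhds
    refine tendsto_nhds_unique h1 ?_
    simpa [hYnorm] using h2
  refine ⟨Xl, fun h0 => by rw [h0] at hXnorm; simp at hXnorm, hXnn, heig⟩
end

lemma exist_eigen_zero (hn : 1 ≤ n) (M : Matrix (Fin n) (Fin n) ℝ)
    (hnn : ∀ i j, 0 ≤ M i j)
    (hub : ∀ z : ℂ, ((M.map (Complex.ofReal)).charpoly).IsRoot z → ‖z‖ ≤ 0) :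
    ∃ X : Fin n → ℝ, X ≠ 0 ∧ (∀ i, 0 ≤ X i) ∧ (∀ i, M.mulVec X i = 0) := by
  classical
  set A := M.map (Complex.ofReal) with hA
  set p := A.charpoly with hp
  have hmonic : p.Monic := Matrix.charpoly_monic A
  have hsplit : p.Splits := IsAlgClosed.splits p
  have hroots : ∀ a ∈ p.roots, a = 0 := by
    intro a ha
    have h1 : p.IsRoot a := (Polynomial.mem_roots (hmonic.ne_zero)).mp ha
    have h2 := hub a h1
    have := norm_nonneg a
    have h3 : ‖a‖ = 0 := le_antisymm h2 this
    exact norm_eq_zero.mp h3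
  have hfact : p = X ^ Multiset.card p.roots := by
    have h1 := hsplit.eq_prod_roots_of_monic hmonic
    have h2 : p.roots.map (fun a => X - C a) = p.roots.map (fun _ => (X : ℂ[X])) :=
      Multiset.map_congr rfl fun a ha => by rw [hroots a ha]; simp
    conv_lhs => rw [h1, h2]
    rw [Multiset.map_const', Multiset.prod_replicate]
  have hnil : A ^ Multiset.card p.roots = 0 := by
    have h1 := Matrix.aeval_self_charpoly A
    rw [← hp, hfact] at h1
    simpa using h1
  have hMnil : M ^ Multiset.card p.roots = 0 := by
    have h1 : (M ^ Multiset.card p.roots).map (Complex.ofReal) = 0 := by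
      rw [← map_pow', hnil]
    ext i j
    have h2 := congrFun (congrFun h1 i) j
    simp only [Matrix.map_apply, Matrix.zero_apply] at h2 ⊢
    exact_mod_cast h2
  have hex : ∃ k, M ^ k = 0 := ⟨_, hMnil⟩
  set k₀ := Nat.find hex with hk₀def
  have hk₀ : M ^ k₀ = 0 := Nat.find_spec hex
  have hk₀pos : 1 ≤ k₀ := by
    rcases Nat.eq_zero_or_pos k₀ with h | h
    · exfalso
      have h1 : M ^ 0 = 0 := h ▸ hk₀
      have h2 := congrFun (congrFun h1 ⟨0, hn⟩) ⟨0, hn⟩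
      simp [Matrix.one_apply] at h2
    · exact h
  have hprev : M ^ (k₀ - 1) ≠ 0 := Nat.find_min hex (by omega)
  set X := (M ^ (k₀ - 1)).mulVec 1 with hX
  have hXnn : ∀ i, 0 ≤ X i := by
    intro i
    rw [hX]
    simp only [Matrix.mulVec, dotProduct, Pi.one_apply, mul_one]
    exact Finset.sum_nonneg fun j _ => matpow_nonneg hnn _ i j
  have hXne : X ≠ 0 := by
    obtain ⟨i, hi⟩ := Function.ne_iff.mp hprev
    obtain ⟨j, hj⟩ := Function.ne_iff.mp hi
    have hij : 0 < (M ^ (k₀ - 1)) i j :=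
      lt_of_le_of_ne (matpow_nonneg hnn _ i j) (Ne.symm (by simpa using hj))
    have hXi : 0 < X i := by
      rw [hX]
      simp only [Matrix.mulVec, dotProduct, Pi.one_apply, mul_one]
      calc (0:ℝ) < (M ^ (k₀ - 1)) i j := hij
      _ ≤ ∑ l, (M ^ (k₀ - 1)) i l :=
          Finset.single_le_sum (fun l _ => matpow_nonneg hnn _ i l) (Finset.mem_univ j)
    intro h0
    rw [h0] at hXi
    simp at hXi
  refine ⟨X, hXne, hXnn, fun i => ?_⟩
  rw [hX, Matrix.mulVec_mulVec]
  have : M * M ^ (k₀ - 1) = M ^ k₀ := by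
    rw [← pow_succ']
    congr 1
    omega
  rw [this, hk₀]
  simp


end CWaux

/-- Collatz–Wielandt formulae: For a nonnegative n×n real
matrix M (n ≥ 1), with ρ(M) the spectral radius (the maximum modulus of the
complex roots of the characteristic polynomial):
ρ(M) = inf { λ > 0 : ∃ X positive, MX ≤ λX };
there is a nonzero nonnegative X with MX = ρ(M)X, so that
ρ(M) = max { λ ≥ 0 : ∃ X ∈ ℝ₊ⁿ \ {0}, MX = λX };
and ρ(M) = max { λ ≥ 0 : ∃ X ∈ ℝ₊ⁿ \ {0}, MX ≥ λX }. -/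
theorem collatz_wielandt_formulae
    (n : ℕ) (hn : 1 ≤ n) (M : Matrix (Fin n) (Fin n) ℝ)
    (hnonneg : ∀ i j, 0 ≤ M i j)
    (ρ : ℝ)
    (hρ : ρ = sSup {x : ℝ | ∃ z : ℂ,
      ((M.map (Complex.ofReal : ℝ → ℂ)).charpoly).IsRoot z ∧
      ‖z‖ = x}) :
    ρ = sInf {lam : ℝ | 0 < lam ∧ ∃ X : Fin n → ℝ,
      (∀ i, 0 < X i) ∧ ∀ i, M.mulVec X i ≤ lam * X i} ∧
    (∃ X : Fin n → ℝ, X ≠ 0 ∧ (∀ i, 0 ≤ X i) ∧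
      (∀ i, M.mulVec X i = ρ * X i)) ∧
    IsGreatest {lam : ℝ | 0 ≤ lam ∧ ∃ X : Fin n → ℝ,
      X ≠ 0 ∧ (∀ i, 0 ≤ X i) ∧ (∀ i, M.mulVec X i = lam * X i)} ρ ∧
    IsGreatest {lam : ℝ | 0 ≤ lam ∧ ∃ X : Fin n → ℝ,
      X ≠ 0 ∧ (∀ i, 0 ≤ X i) ∧ (∀ i, lam * X i ≤ M.mulVec X i)} ρ := by
  classical
  open CWaux in
  have hcard : Fintype.card (Fin n) = n := Fintype.card_fin n
  have hmonic : ((M.map (Complex.ofReal : ℝ → ℂ)).charpoly).Monic :=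
    Matrix.charpoly_monic _
  have hpne : ((M.map (Complex.ofReal : ℝ → ℂ)).charpoly) ≠ 0 := hmonic.ne_zero
  have hdeg : ((M.map (Complex.ofReal : ℝ → ℂ)).charpoly).natDegree = n := by
    rw [Matrix.charpoly_natDegree_eq_dim, hcard]
  have hdegne : ((M.map (Complex.ofReal : ℝ → ℂ)).charpoly).degree ≠ 0 := by
    rw [Polynomial.degree_eq_natDegree hpne, hdeg]
    exact_mod_cast (by omega : n ≠ 0)
  obtain ⟨zr, hzr⟩ := IsAlgClosed.exists_root _ hdegne
  have hSne : {x : ℝ | ∃ z : ℂ, ((M.map (Complex.ofReal : ℝ → ℂ)).charpoly).IsRoot z ∧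
      ‖z‖ = x}.Nonempty := ⟨‖zr‖, zr, hzr, rfl⟩
  have hfin : {x : ℝ | ∃ z : ℂ, ((M.map (Complex.ofReal : ℝ → ℂ)).charpoly).IsRoot z ∧
      ‖z‖ = x}.Finite := by
    have h1 : {x : ℝ | ∃ z : ℂ, ((M.map (Complex.ofReal : ℝ → ℂ)).charpoly).IsRoot z ∧
        ‖z‖ = x}
        = (fun z : ℂ => ‖z‖) '' {z : ℂ | ((M.map (Complex.ofReal : ℝ → ℂ)).charpoly).IsRoot z} := by
      ext x
      constructor
      · rintro ⟨z, h1, h2⟩; exact ⟨z, h1, h2⟩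
      · rintro ⟨z, h1, h2⟩; exact ⟨z, h1, h2⟩
    rw [h1]
    apply Set.Finite.image
    have h2 : {z : ℂ | ((M.map (Complex.ofReal : ℝ → ℂ)).charpoly).IsRoot z}
        = ↑((M.map (Complex.ofReal : ℝ → ℂ)).charpoly).roots.toFinset := by
      ext z
      simp [Polynomial.mem_roots hpne]
    rw [h2]
    exact Finset.finite_toSet _
  have hρmem : ρ ∈ {x : ℝ | ∃ z : ℂ, ((M.map (Complex.ofReal : ℝ → ℂ)).charpoly).IsRoot z ∧
      ‖z‖ = x} := by rw [hρ]; exact hSne.csSup_mem hfin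
  obtain ⟨z₀, hz₀, habs⟩ := hρmem
  have hub : ∀ z : ℂ, ((M.map (Complex.ofReal : ℝ → ℂ)).charpoly).IsRoot z →
      ‖z‖ ≤ ρ := fun z hz => by
    rw [hρ]; exact le_csSup hfin.bddAbove ⟨z, hz, rfl⟩
  have hρ0 : 0 ≤ ρ := habs ▸ norm_nonneg z₀
  -- existence of a nonnegative eigenvector for ρ
  have hEX : ∃ X : Fin n → ℝ, X ≠ 0 ∧ (∀ i, 0 ≤ X i) ∧ (∀ i, M.mulVec X i = ρ * X i) := by
    rcases eq_or_lt_of_le hρ0 with heq | hlt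
    · obtain ⟨X, h1, h2, h3⟩ := exist_eigen_zero hn M hnonneg
        (fun z hz => by rw [heq]; exact hub z hz)
      exact ⟨X, h1, h2, fun i => by rw [h3 i, ← heq]; ring⟩
    · exact exist_eigen_pos M hnonneg hub hn hlt hz₀ habs
  refine ⟨?_, hEX, ?_, ?_⟩
  · -- sInf formula
    refine le_antisymm (le_csInf ?_ ?_) ?_
    · -- nonempty
      refine ⟨1 + ∑ i, ∑ j, M i j, ?_, fun _ => 1, fun i => one_pos, fun i => ?_⟩
      · have h1 : 0 ≤ ∑ i, ∑ j, M i j :=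
          Finset.sum_nonneg fun i _ => Finset.sum_nonneg fun j _ => hnonneg i j
        linarith
      · have h2 : M.mulVec (fun _ => 1) i = ∑ j, M i j := by
          simp [Matrix.mulVec, dotProduct]
        have h3 : ∑ j, M i j ≤ ∑ i', ∑ j, M i' j :=
          Finset.single_le_sum (f := fun i' => ∑ j, M i' j)
            (fun i' _ => Finset.sum_nonneg fun j _ => hnonneg i' j) (Finset.mem_univ i)
        rw [h2]
        simp only [mul_one]
        linarith
    · -- ρ is a lower bound
      rintro lam ⟨hlam, X, hX, hle⟩
      rw [← habs]
      exact cw_le M hnonneg hz₀ hX hle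
    · -- sInf ≤ ρ
      refine le_of_forall_pos_le_add fun ε hε => ?_
      have htε : ρ < ρ + ε := by linarith
      have htpos : 0 < ρ + ε := by linarith
      refine csInf_le ⟨0, fun lam hlam => hlam.1.le⟩ ?_
      refine ⟨htpos, Sv M (ρ + ε), fun i => ?_, fun i => ?_⟩
      · exact lt_of_lt_of_le (inv_pos.mpr htpos) (Sv_pos M hnonneg hρ0 hub htε i)
      · rw [Sv_mulVec M hnonneg hρ0 hub htε i]
        have := Sv_pos M hnonneg hρ0 hub htε i
        linarith
  · -- IsGreatest for the equality set
    constructor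
    · exact ⟨hρ0, hEX⟩
    · rintro lam ⟨hlam0, X, hXne, hXnn, heq⟩
      exact cw_ge M hnonneg hρ0 hub hXne hXnn (fun i => (heq i).ge)
  · -- IsGreatest for the inequality set
    constructor
    · obtain ⟨X, hXne, hXnn, heq⟩ := hEX
      exact ⟨hρ0, X, hXne, hXnn, fun i => (heq i).ge⟩
    · rintro lam ⟨hlam0, X, hXne, hXnn, hge⟩
      exact cw_ge M hnonneg hρ0 hub hXne hXnn hge
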